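/- If P is a symmetric positive semidefinite real d×d matrix, then the Frobenius norm of P^{1/2} - id is at most the Frobenius norm of P - id, where P^{1/2} is the positive semidefinite square root of P. -/

import Mathlib

open Matrix

/-- The Frobenius norm of a real matrix: `‖A‖ = sqrt (trace (Aᵀ A))`. -/
noncomputable def frobNorm {m n : Type*} [Fintype m] [Fintype n]
    (A : Matrix m n ℝ) : ℝ :=
  Real.sqrt (Matrix.trace (Aᵀ * A))

open scoped ComplexOrder in
/-- The former Mathlib `Matrix.PosSemidef.sqrt` (removed upstream), with its old definition. -/
noncomputable def Matrix.PosSemidef.sqrt {n 𝕜 : Type*} [Fintype n] [RCLike 𝕜] [DecidableEq n]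
    {A : Matrix n n 𝕜} (hA : A.PosSemidef) : Matrix n n 𝕜 :=
  hA.1.eigenvectorUnitary.1 * diagonal ((↑) ∘ (√·) ∘ hA.1.eigenvalues) *
    (star hA.1.eigenvectorUnitary : Matrix n n 𝕜)

lemma frob_key {d : ℕ} (U : Matrix.unitaryGroup (Fin d) ℝ) (f : Fin d → ℝ) :
    Matrix.trace ((((U : Matrix (Fin d) (Fin d) ℝ) * diagonal f * star (U : Matrix (Fin d) (Fin d) ℝ))ᵀ) *
      ((U : Matrix (Fin d) (Fin d) ℝ) * diagonal f * star (U : Matrix (Fin d) (Fin d) ℝ))) = ∑ i, f i ^ 2 := by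
  set V := (U : Matrix (Fin d) (Fin d) ℝ)
  have hV : star V * V = 1 := (Matrix.mem_unitaryGroup_iff').mp U.2
  have hsym : (V * diagonal f * star V)ᵀ = V * diagonal f * star V := by
    have : star V = Vᵀ := rfl
    simp [this, transpose_mul, diagonal_transpose, mul_assoc]
  rw [hsym]
  have : (V * diagonal f * star V) * (V * diagonal f * star V)
      = V * (diagonal f * diagonal f) * star V := by
    simp only [mul_assoc]
    rw [← mul_assoc (star V) V, hV, one_mul]
  rw [this, trace_mul_cycle, ← mul_assoc, hV, one_mul, diagonal_mul_diagonal, trace_diagonal]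
  simp [sq]

lemma frob_conj_diag {d : ℕ} (U : Matrix.unitaryGroup (Fin d) ℝ) (f : Fin d → ℝ) :
    (U : Matrix (Fin d) (Fin d) ℝ) * diagonal (fun i => f i - 1) * star (U : Matrix (Fin d) (Fin d) ℝ)
      = (U : Matrix (Fin d) (Fin d) ℝ) * diagonal f * star (U : Matrix (Fin d) (Fin d) ℝ) - 1 := by
  have hV : (U : Matrix (Fin d) (Fin d) ℝ) * star (U : Matrix (Fin d) (Fin d) ℝ) = 1 :=
    (Matrix.mem_unitaryGroup_iff).mp U.2
  have : diagonal (fun i => f i - 1) = diagonal f - (1 : Matrix (Fin d) (Fin d) ℝ) := by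
    rw [← diagonal_one, ← diagonal_sub]
  rw [this, mul_sub, sub_mul, mul_one, hV]

/-- If `P` is symmetric positive semidefinite, then `‖P^{1/2} - id‖ ≤ ‖P - id‖`
in the Frobenius norm. -/
theorem frobNorm_sqrt_sub_one_le
    (d : ℕ) (P : Matrix (Fin d) (Fin d) ℝ) (hP : P.PosSemidef) :
    frobNorm (hP.sqrt - 1) ≤ frobNorm (P - 1) := by
  unfold frobNorm
  set U := hP.1.eigenvectorUnitary
  set lam := hP.1.eigenvalues
  have hs : hP.sqrt - 1 = (U : Matrix (Fin d) (Fin d) ℝ) *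
      diagonal (fun i => Real.sqrt (lam i) - 1) * star (U : Matrix (Fin d) (Fin d) ℝ) := by
    rw [frob_conj_diag]
    congr 1
  have hp : P - 1 = (U : Matrix (Fin d) (Fin d) ℝ) *
      diagonal (fun i => lam i - 1) * star (U : Matrix (Fin d) (Fin d) ℝ) := by
    rw [frob_conj_diag]
    congr 1
    conv_lhs => rw [hP.1.spectral_theorem]
    norm_num [Function.comp]
    rfl
  rw [hs, hp, frob_key, frob_key]
  apply Real.sqrt_le_sqrt
  apply Finset.sum_le_sum
  intro i _
  have h0 : 0 ≤ lam i := hP.eigenvalues_nonneg i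
  have hsq : Real.sqrt (lam i) ^ 2 = lam i := Real.sq_sqrt h0
  have hs0 : 0 ≤ Real.sqrt (lam i) := Real.sqrt_nonneg _
  nlinarith [sq_nonneg (Real.sqrt (lam i) - 1), sq_nonneg (Real.sqrt (lam i) + 1)]
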